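/- Let G be a group and p ∈ [1,∞). Let w_p be the left regular representation of G on ℓ^p(G) and F^p_r(G) the closed linear span of {w_p(g)} in B(ℓ^p(G)). If a ∈ F^p_r(G) satisfies τ_p(a·w_p(g)) = 0 for all g ∈ G, where τ_p(a) = (aδ_1)(1), then a = 0. -/

import Mathlib

open scoped ENNReal

set_option synthInstance.maxHeartbeats 1000000
set_option maxHeartbeats 1000000

/-- Coordinate evaluation on `lp` as a continuous linear functional. -/
noncomputable def lpEv {G : Type*} (p : ℝ≥0∞) [Fact (1 ≤ p)] (h : G) :
    lp (fun _ : G => ℂ) p →L[ℂ] ℂ :=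
  LinearMap.mkContinuous
    { toFun := fun ξ => ξ h
      map_add' := fun ξ η => by simp
      map_smul' := fun c ξ => by simp }
    1
    (fun ξ => by
      have hpne : p ≠ 0 := (zero_lt_one.trans_le (Fact.out : (1 : ℝ≥0∞) ≤ p)).ne'
      show ‖ξ h‖ ≤ 1 * ‖ξ‖
      simpa using lp.norm_apply_le_norm hpne ξ h)

@[simp] lemma lpEv_apply {G : Type*} (p : ℝ≥0∞) [Fact (1 ≤ p)] (h : G)
    (ξ : lp (fun _ : G => ℂ) p) : lpEv p h ξ = ξ h := rfl

/-- faithfulness of the trace `τ_p` on `F^p_r(G)`: if `a` lies in the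
closed span of the left regular representation and `τ_p (a * w_p g) = 0` for all `g`,
then `a = 0`. -/
theorem lp_regular_rep_trace_faithful
    {G : Type*} [Group G] [DecidableEq G] (p : ℝ≥0∞) [Fact (1 ≤ p)] (hp : p ≠ ⊤)
    (W : G → (lp (fun _ : G => ℂ) p →L[ℂ] lp (fun _ : G => ℂ) p))
    (hW : ∀ (g : G) (ξ : lp (fun _ : G => ℂ) p) (h : G), (W g ξ) h = ξ (g⁻¹ * h))
    (τ : (lp (fun _ : G => ℂ) p →L[ℂ] lp (fun _ : G => ℂ) p) → ℂ)
    (hτ : ∀ a, τ a = (a (lp.single p (1 : G) (1 : ℂ))) (1 : G))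
    (a : lp (fun _ : G => ℂ) p →L[ℂ] lp (fun _ : G => ℂ) p)
    (ha : a ∈ (Submodule.span ℂ (Set.range W)).topologicalClosure)
    (hvan : ∀ g : G, τ (a * W g) = 0) :
    a = 0 := by
  set δ : G → lp (fun _ : G => ℂ) p := fun g => lp.single p g (1 : ℂ) with hδ
  have hδapp : ∀ g m : G, (δ g : lp (fun _ : G => ℂ) p) m = if m = g then 1 else 0 := by
    intro g m
    by_cases hmg : m = g
    · subst hmg; simp [hδ, lp.single_apply_self]
    · simp [hδ, lp.single_apply_ne p g _ hmg, hmg]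
  -- Key equivariance relation, proved by a closed-submodule argument.
  have key : ∀ g h : G, (a (δ g)) h = (a (δ 1)) (h * g⁻¹) := by
    intro g h
    set T : (lp (fun _ : G => ℂ) p →L[ℂ] lp (fun _ : G => ℂ) p) →L[ℂ] ℂ :=
      ((lpEv p h).comp (ContinuousLinearMap.apply ℂ _ (δ g)))
        - ((lpEv p (h * g⁻¹)).comp (ContinuousLinearMap.apply ℂ _ (δ 1))) with hT
    have hspan : Submodule.span ℂ (Set.range W) ≤ LinearMap.ker (T : (lp (fun _ : G => ℂ) p →L[ℂ] lp (fun _ : G => ℂ) p) →ₗ[ℂ] ℂ) := by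
      rw [Submodule.span_le]
      rintro _ ⟨g₀, rfl⟩
      have hconds : (g₀⁻¹ * (h * g⁻¹) = 1) ↔ (g₀⁻¹ * h = g) := by
        rw [← mul_assoc, mul_inv_eq_one]
      simp only [SetLike.mem_coe, LinearMap.mem_ker, ContinuousLinearMap.coe_coe, hT,
        ContinuousLinearMap.coe_sub', Pi.sub_apply, ContinuousLinearMap.comp_apply,
        ContinuousLinearMap.apply_apply, lpEv_apply, hW, hδapp, sub_eq_zero]
      by_cases hc : g₀⁻¹ * h = g
      · rw [if_pos hc, if_pos (hconds.mpr hc)]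
      · rw [if_neg hc, if_neg (fun hc' => hc (hconds.mp hc'))]
    have hker : (Submodule.span ℂ (Set.range W)).topologicalClosure ≤ LinearMap.ker (T : (lp (fun _ : G => ℂ) p →L[ℂ] lp (fun _ : G => ℂ) p) →ₗ[ℂ] ℂ) :=
      Submodule.topologicalClosure_minimal _ hspan (ContinuousLinearMap.isClosed_ker T)
    have hTa : T a = 0 := hker ha
    simpa [hT, sub_eq_zero] using hTa
  -- The first column of `a` vanishes.
  have h1 : ∀ k : G, (a (δ 1)) k = 0 := by
    intro k
    have hWδ : (W k⁻¹) (lp.single p (1 : G) (1 : ℂ)) = δ k⁻¹ := by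
      apply lp.ext
      funext m
      rw [hW]
      have : (lp.single p (1 : G) (1 : ℂ)) = δ 1 := rfl
      rw [this, hδapp, hδapp]
      by_cases hm : m = k⁻¹
      · rw [if_pos (by rw [hm]; group), if_pos hm]
      · rw [if_neg (fun h' => hm (eq_inv_of_mul_eq_one_right (by rwa [inv_inv] at h'))), if_neg hm]
    have hv := hvan k⁻¹
    rw [hτ, ContinuousLinearMap.mul_apply, hWδ] at hv
    have hv' : (a (δ k⁻¹)) 1 = 0 := hv
    have := key k⁻¹ 1
    rw [hv', inv_inv, one_mul] at this
    exact this.symm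
  -- Hence `a` kills every `δ g`.
  have hδ0 : ∀ g : G, a (δ g) = 0 := by
    intro g
    apply lp.ext
    funext h
    rw [key g h]
    simpa using h1 (h * g⁻¹)
  -- Conclude by density of finitely supported vectors.
  refine ContinuousLinearMap.ext fun f => ?_
  rw [ContinuousLinearMap.zero_apply]
  have hs : HasSum (fun i : G => lp.single p i (f i)) f := lp.hasSum_single hp f
  have hs2 : HasSum (fun i : G => a (lp.single p i (f i))) (a f) := a.hasSum hs
  have hzero : ∀ i : G, a (lp.single p i (f i)) = 0 := by
    intro i
    have hsingle : lp.single p i (f i) = (f i) • δ i := by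
      rw [hδ, ← lp.single_smul, smul_eq_mul, mul_one]
    rw [hsingle, map_smul, hδ0, smul_zero]
  simp only [hzero] at hs2
  exact hs2.unique hasSum_zero
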